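/- Let a, b ∈ ℝ³ be unit vectors and let A, B be the qubit observables with eigenprojectors P^a_± = (I ± a·σ)/2 and P^b_± = (I ± b·σ)/2. Then the infimum over all 2×2 density matrices ρ of (1/2)[T₂(p_ρ^A) + T₂(q_ρ^{A→B})] equals (1/4)(1 − (a·b)²), where p_ρ^A(i) = Tr[P^a_i ρ] and q_ρ^{A→B}(j) = Σ_{i=±} Tr[P^a_i ρ] Tr[P^a_i P^b_j]. -/

import Mathlib

open Matrix
open scoped BigOperators ComplexOrder

/-- a·σ = a₁σ_x + a₂σ_y + a₃σ_z. -/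
noncomputable def pauliDot (v : Fin 3 → ℝ) : Matrix (Fin 2) (Fin 2) ℂ :=
  (v 0 : ℂ) • !![0, 1; 1, 0] + (v 1 : ℂ) • !![0, -Complex.I; Complex.I, 0]
    + (v 2 : ℂ) • !![1, 0; 0, -1]

/-- Eigenprojectors P^a_± = (I ± a·σ)/2; `blochProj a true = P^a_+`. -/
noncomputable def blochProj (v : Fin 3 → ℝ) (s : Bool) : Matrix (Fin 2) (Fin 2) ℂ :=
  (1 / 2 : ℂ) • (1 + (if s then 1 else -1 : ℂ) • pauliDot v)

/-- p_ρ^A(i) = Tr[P^a_i ρ]. -/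
noncomputable def qubitProb (a : Fin 3 → ℝ) (ρ : Matrix (Fin 2) (Fin 2) ℂ) (i : Bool) : ℝ :=
  ((blochProj a i * ρ).trace).re

/-- q_ρ^{A→B}(j) = Σ_i Tr[P^a_i ρ] Tr[P^a_i P^b_j]. -/
noncomputable def qubitProbSucc (a b : Fin 3 → ℝ) (ρ : Matrix (Fin 2) (Fin 2) ℂ)
    (j : Bool) : ℝ :=
  ∑ i : Bool, qubitProb a ρ i * ((blochProj a i * blochProj b j).trace).re

lemma pauliDot_eq (v : Fin 3 → ℝ) :
    pauliDot v = !![(v 2 : ℂ), (v 0 : ℂ) - (v 1 : ℂ) * Complex.I;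
      (v 0 : ℂ) + (v 1 : ℂ) * Complex.I, -(v 2 : ℂ)] := by
  ext i j
  fin_cases i <;> fin_cases j <;> simp [pauliDot] <;> ring

lemma trace_pauli (v : Fin 3 → ℝ) : (pauliDot v).trace = 0 := by
  simp [pauliDot_eq, Matrix.trace_fin_two_of]

lemma trace_pauli_mul (v w : Fin 3 → ℝ) :
    (pauliDot v * pauliDot w).trace = 2 * ((∑ i, v i * w i : ℝ) : ℂ) := by
  simp [pauliDot_eq, Matrix.mul_fin_two, Matrix.trace_fin_two_of, Fin.sum_univ_three]
  ring_nf
  simp [Complex.I_sq]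

lemma pauli_sq (v : Fin 3 → ℝ) (hv : ∑ i, v i ^ 2 = 1) :
    pauliDot v * pauliDot v = 1 := by
  have h : (v 0 : ℂ)^2 + (v 1 : ℂ)^2 + (v 2 : ℂ)^2 = 1 := by
    have := hv
    simp [Fin.sum_univ_three] at this
    exact_mod_cast this
  ext i j
  fin_cases i <;> fin_cases j <;>
    simp [pauliDot_eq, Matrix.mul_fin_two, Matrix.one_fin_two]
  · linear_combination h - (v 1 : ℂ) ^ 2 * Complex.I_sq
  · ring
  · ring
  · linear_combination h - (v 1 : ℂ) ^ 2 * Complex.I_sq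

lemma pauli_herm (v : Fin 3 → ℝ) : (pauliDot v)ᴴ = pauliDot v := by
  ext i j
  fin_cases i <;> fin_cases j <;>
    simp [pauliDot_eq, Matrix.conjTranspose_apply, Complex.ext_iff]

lemma blochProj_herm (v : Fin 3 → ℝ) (s : Bool) : (blochProj v s)ᴴ = blochProj v s := by
  cases s <;>
    simp [blochProj, Matrix.conjTranspose_smul, Matrix.conjTranspose_add, pauli_herm,
      Complex.ext_iff]

lemma blochProj_add (v : Fin 3 → ℝ) : blochProj v true + blochProj v false = 1 := by
  simp only [blochProj, if_true, Bool.false_eq_true, if_false, smul_add, neg_smul, one_smul]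
  module

lemma blochProj_idem (v : Fin 3 → ℝ) (hv : ∑ i, v i ^ 2 = 1) (s : Bool) :
    blochProj v s * blochProj v s = blochProj v s := by
  have h := pauli_sq v hv
  cases s <;>
    simp only [blochProj, if_true, Bool.false_eq_true, if_false, Matrix.smul_mul, Matrix.mul_smul, add_mul,
      mul_add, one_mul, mul_one, h, neg_smul, one_smul, Matrix.neg_mul, Matrix.mul_neg,
      smul_neg, neg_neg] <;>
    module

lemma blochProj_psd (v : Fin 3 → ℝ) (hv : ∑ i, v i ^ 2 = 1) (s : Bool) :
    (blochProj v s).PosSemidef := by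
  have := Matrix.posSemidef_self_mul_conjTranspose (blochProj v s)
  rwa [blochProj_herm, blochProj_idem v hv] at this

lemma trace_blochProj_mul (a b : Fin 3 → ℝ) (i j : Bool) :
    ((blochProj a i * blochProj b j).trace).re
      = (1 + (if i then (1:ℝ) else -1) * (if j then (1:ℝ) else -1) * (∑ k, a k * b k)) / 2 := by
  cases i <;> cases j <;>
    simp only [blochProj, if_true, Bool.false_eq_true, if_false, Matrix.smul_mul, Matrix.mul_smul, add_mul,
      mul_add, one_mul, mul_one, neg_smul, one_smul, Matrix.neg_mul, Matrix.mul_neg,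
      smul_neg, neg_neg, Matrix.trace_add, Matrix.trace_smul, Matrix.trace_neg,
      Matrix.trace_one, trace_pauli, trace_pauli_mul, smul_add, smul_neg] <;>
    simp [Complex.ext_iff] <;> ring

lemma psd_trace_re_nonneg (M : Matrix (Fin 2) (Fin 2) ℂ) (hM : M.PosSemidef) :
    0 ≤ (M.trace).re := by
  have h0 := hM.re_dotProduct_nonneg (Pi.single 0 1)
  have h1 := hM.re_dotProduct_nonneg (Pi.single 1 1)
  simp [dotProduct, Matrix.mulVec, Pi.single_apply, Fin.sum_univ_two] at h0 h1
  rw [Matrix.trace_fin_two]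
  simp only [Complex.add_re]
  exact add_nonneg h0 h1

open scoped MatrixOrder in
lemma trace_mul_re_nonneg (P ρ : Matrix (Fin 2) (Fin 2) ℂ)
    (hP : P.PosSemidef) (hρ : ρ.PosSemidef) : 0 ≤ ((P * ρ).trace).re := by
  have hs : CFC.sqrt P * CFC.sqrt P = P := CFC.sqrt_mul_sqrt_self P hP.nonneg
  have hherm : (CFC.sqrt P)ᴴ = CFC.sqrt P := (CFC.sqrt_nonneg P).posSemidef.1
  have hpsd : (CFC.sqrt P * ρ * (CFC.sqrt P)ᴴ).PosSemidef := hρ.mul_mul_conjTranspose_same _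
  rw [hherm] at hpsd
  have heq : (P * ρ).trace = (CFC.sqrt P * ρ * CFC.sqrt P).trace := by
    conv_lhs => rw [← hs]
    rw [Matrix.mul_assoc, Matrix.trace_mul_comm]
  rw [heq]
  exact psd_trace_re_nonneg _ hpsd

lemma trace_blochProj (v : Fin 3 → ℝ) (s : Bool) : (blochProj v s).trace = 1 := by
  cases s <;>
    simp [blochProj, Matrix.trace_add, Matrix.trace_smul, Matrix.trace_one, trace_pauli] <;>
    norm_num

lemma qubitProb_false (a : Fin 3 → ℝ) (ρ : Matrix (Fin 2) (Fin 2) ℂ) (htr : ρ.trace = 1) :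
    qubitProb a ρ false = 1 - qubitProb a ρ true := by
  have h : qubitProb a ρ true + qubitProb a ρ false = (ρ.trace).re := by
    unfold qubitProb
    rw [← Complex.add_re, ← Matrix.trace_add, ← Matrix.add_mul, blochProj_add, Matrix.one_mul]
  rw [htr] at h
  simp at h
  linarith

lemma objective_eq (a b : Fin 3 → ℝ) (ρ : Matrix (Fin 2) (Fin 2) ℂ)
    (hpf : qubitProb a ρ false = 1 - qubitProb a ρ true) :
    (1 / 2 : ℝ) * ((1 - ∑ i : Bool, qubitProb a ρ i ^ 2)
        + (1 - ∑ j : Bool, qubitProbSucc a b ρ j ^ 2))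
    = (1 / 2) * ((1 - (qubitProb a ρ true ^ 2 + (1 - qubitProb a ρ true) ^ 2))
        + (1 - ((qubitProb a ρ true * ((1 + ∑ k, a k * b k) / 2)
              + (1 - qubitProb a ρ true) * ((1 - ∑ k, a k * b k) / 2)) ^ 2
            + (qubitProb a ρ true * ((1 - ∑ k, a k * b k) / 2)
              + (1 - qubitProb a ρ true) * ((1 + ∑ k, a k * b k) / 2)) ^ 2))) := by
  simp only [qubitProbSucc, Fintype.sum_bool, trace_blochProj_mul, hpf, if_true,
    Bool.false_eq_true, if_false]
  ring

theorem qubit_tsallis2_succ_EUR (a b : Fin 3 → ℝ)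
    (ha : ∑ i, a i ^ 2 = 1) (hb : ∑ i, b i ^ 2 = 1) :
    sInf {x : ℝ | ∃ ρ : Matrix (Fin 2) (Fin 2) ℂ, ρ.PosSemidef ∧ ρ.trace = 1 ∧
        x = (1 / 2) * ((1 - ∑ i : Bool, qubitProb a ρ i ^ 2)
          + (1 - ∑ j : Bool, qubitProbSucc a b ρ j ^ 2))}
      = (1 / 4) * (1 - (∑ i, a i * b i) ^ 2) := by
  have ha' : ∑ k, a k * a k = 1 := by
    rw [← ha]; exact Finset.sum_congr rfl fun k _ => (sq (a k)).symm
  have hmem : (1 / 4 : ℝ) * (1 - (∑ i, a i * b i) ^ 2) ∈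
      {x : ℝ | ∃ ρ : Matrix (Fin 2) (Fin 2) ℂ, ρ.PosSemidef ∧ ρ.trace = 1 ∧
        x = (1 / 2) * ((1 - ∑ i : Bool, qubitProb a ρ i ^ 2)
          + (1 - ∑ j : Bool, qubitProbSucc a b ρ j ^ 2))} := by
    refine ⟨blochProj a true, blochProj_psd a ha true, trace_blochProj a true, ?_⟩
    have htr : (blochProj a true).trace = 1 := trace_blochProj a true
    have hp : qubitProb a (blochProj a true) true = 1 := by
      show ((blochProj a true * blochProj a true).trace).re = 1
      rw [trace_blochProj_mul a a true true]
      simp [ha']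
    rw [objective_eq a b _ (qubitProb_false a _ htr), hp]
    ring
  have hlb : ∀ x ∈ {x : ℝ | ∃ ρ : Matrix (Fin 2) (Fin 2) ℂ, ρ.PosSemidef ∧ ρ.trace = 1 ∧
        x = (1 / 2) * ((1 - ∑ i : Bool, qubitProb a ρ i ^ 2)
          + (1 - ∑ j : Bool, qubitProbSucc a b ρ j ^ 2))},
      (1 / 4 : ℝ) * (1 - (∑ i, a i * b i) ^ 2) ≤ x := by
    rintro x ⟨ρ, hρ, htr, rfl⟩
    have hp0 : 0 ≤ qubitProb a ρ true :=
      trace_mul_re_nonneg _ _ (blochProj_psd a ha true) hρ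
    have hpf := qubitProb_false a ρ htr
    have hp1 : qubitProb a ρ true ≤ 1 := by
      have h2 : 0 ≤ qubitProb a ρ false :=
        trace_mul_re_nonneg _ _ (blochProj_psd a ha false) hρ
      rw [hpf] at h2; linarith
    rw [objective_eq a b ρ hpf]
    set p := qubitProb a ρ true
    set c := ∑ k, a k * b k
    nlinarith [mul_nonneg hp0 (by linarith : (0:ℝ) ≤ 1 - p),
      mul_nonneg (mul_nonneg hp0 (by linarith : (0:ℝ) ≤ 1 - p)) (sq_nonneg c)]
  exact le_antisymm (csInf_le ⟨_, fun x hx => hlb x hx⟩ hmem) (le_csInf ⟨_, hmem⟩ hlb)
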